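/- The clobber position ooxx on a path of four cells is equivalent to the zero game (a second-player win). -/

import Mathlib

namespace SetTheory

universe u

inductive PGame : Type (u + 1)
  | mk : ∀ α β : Type u, (α → PGame) → (β → PGame) → PGame

namespace PGame

def ofLists (L R : List PGame.{u}) : PGame.{u} :=
  mk (ULift (Fin L.length)) (ULift (Fin R.length)) (fun i => L.get i.down) fun j => R.get j.down

instance : Zero PGame :=
  ⟨⟨PEmpty, PEmpty, PEmpty.elim, PEmpty.elim⟩⟩

noncomputable def leLF (x : PGame.{u}) : PGame.{u} → Prop × Prop :=
  PGame.rec (motive := fun _ => PGame.{u} → Prop × Prop)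
    (fun _ _ _ _ IHxL IHxR y =>
      PGame.rec (motive := fun _ => Prop × Prop)
        (fun yl yr yL yR IHyL IHyR =>
          ((∀ i, (IHxL i (mk yl yr yL yR)).2) ∧ ∀ j, (IHyR j).2,
           (∃ i, (IHyL i).1) ∨ ∃ j, (IHxR j (mk yl yr yL yR)).1)) y) x

noncomputable instance : LE PGame :=
  ⟨fun x y => (leLF x y).1⟩

def Equiv (x y : PGame) : Prop :=
  x ≤ y ∧ y ≤ x

instance : HasEquiv PGame :=
  ⟨Equiv⟩

end PGame

end SetTheory

open SetTheory PGame

inductive Cell | x | o | e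
deriving DecidableEq

abbrev Pos := List Cell

/-- All positions reachable by one move of the player with stones `me`
clobbering an adjacent stone of the opponent `opp`. -/
def movesAux (me opp : Cell) : Pos → List Pos
  | a :: b :: rest =>
      (if a = me ∧ b = opp then [Cell.e :: me :: rest] else []) ++
      (if a = opp ∧ b = me then [me :: Cell.e :: rest] else []) ++
      (movesAux me opp (b :: rest)).map (a :: ·)
  | _ => []

def leftMoves (p : Pos) : List Pos := movesAux Cell.x Cell.o p
def rightMoves (p : Pos) : List Pos := movesAux Cell.o Cell.x p

def stones (p : Pos) : Nat := p.countP (· != Cell.e)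

/-- Game value of a clobber position, via fuel recursion (each move removes one stone). -/
def valueFuel : Nat → Pos → PGame
  | 0, _ => 0
  | n+1, p => PGame.ofLists ((leftMoves p).map (valueFuel n)) ((rightMoves p).map (valueFuel n))

def value (p : Pos) : PGame := valueFuel (stones p) p


private def z : PGame := PGame.ofLists [] []
private def s : PGame := PGame.ofLists [z] [z]
private def g : PGame := PGame.ofLists [s] [s]

private lemma zero_eq_mk : (0 : PGame.{u}) = PGame.mk PEmpty PEmpty PEmpty.elim PEmpty.elim := rfl

private lemma leLF_mk {xl xr yl yr : Type u} (xL : xl → PGame) (xR : xr → PGame)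
    (yL : yl → PGame) (yR : yr → PGame) :
    PGame.leLF (PGame.mk xl xr xL xR) (PGame.mk yl yr yL yR) =
      ((∀ i, (PGame.leLF (xL i) (PGame.mk yl yr yL yR)).2) ∧
          ∀ j, (PGame.leLF (PGame.mk xl xr xL xR) (yR j)).2,
        (∃ i, (PGame.leLF (PGame.mk xl xr xL xR) (yL i)).1) ∨
          ∃ j, (PGame.leLF (xR j) (PGame.mk yl yr yL yR)).1) := rfl

private lemma g_equiv_zero : g ≈ (0 : PGame) := by
  constructor
  · show (PGame.leLF _ _).1
    simp only [g, s, z, PGame.ofLists, zero_eq_mk, leLF_mk]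
    simp [leLF_mk]
  · show (PGame.leLF _ _).1
    simp only [g, s, z, PGame.ofLists, zero_eq_mk, leLF_mk]
    simp [leLF_mk]

/-- The clobber position `ooxx` is a second-player win, i.e. equivalent to `0`. -/
theorem ooxx_equiv_zero : value [Cell.o, Cell.o, Cell.x, Cell.x] ≈ (0 : PGame) := by
  have h : value [Cell.o, Cell.o, Cell.x, Cell.x] = g := rfl
  rw [h]; exact g_equiv_zero
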